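/- Let U ∈ B(H₁,H₂) and Φ, Ψ be Bessel sequences in H₂ and H₁ respectively such that G_{U,Φ,Ψ} = T_Φ* U T_Ψ is invertible on ℓ². Then Φ and Ψ are Riesz sequences, i.e., there exist constants A, B > 0 with A Σ|c_i|² ≤ ‖Σ c_i φ_i‖² ≤ B Σ|c_i|² for all finite scalar sequences (and similarly for Ψ). In particular, T_Φ and T_Ψ are bounded below: ‖T_Φ d‖ ≥ ‖d‖ / (√(B_Ψ) ‖G_{U,Φ,Ψ}^{-1}‖ ‖U‖). -/

import Mathlib

open ContinuousLinearMap

noncomputable section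

/-- ℓ² over a countable index set. -/
abbrev L2 : Type := lp (fun _ : ℕ => ℂ) 2

set_option maxHeartbeats 1000000 in
/-- if `G_{U,Φ,Ψ}` is invertible (two-sided inverse `Ginv`) for Bessel
sequences `Φ, Ψ` (Bessel bounds `BΦ, BΨ`), then `Φ` and `Ψ` are Riesz sequences, and
`‖TΦ d‖ ≥ ‖d‖ / (√BΨ ‖Ginv‖ ‖U‖)`. -/
theorem stmt_12
    {H1 H2 : Type} [NormedAddCommGroup H1] [InnerProductSpace ℂ H1] [CompleteSpace H1]
    [NormedAddCommGroup H2] [InnerProductSpace ℂ H2] [CompleteSpace H2]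
    (Φ : ℕ → H2) (Ψ : ℕ → H1) (BΦ BΨ : ℝ)
    (TΦ : L2 →L[ℂ] H2) (TΨ : L2 →L[ℂ] H1)
    (hΦ : ∀ i, TΦ (lp.single 2 i 1) = Φ i)
    (hΨ : ∀ i, TΨ (lp.single 2 i 1) = Ψ i)
    (hBΦ : ‖TΦ‖ ≤ Real.sqrt BΦ) (hBΨ : ‖TΨ‖ ≤ Real.sqrt BΨ)
    (U : H1 →L[ℂ] H2)
    (Ginv : L2 →L[ℂ] L2)
    (hGinv1 : (adjoint TΦ ∘L U ∘L TΨ) ∘L Ginv = ContinuousLinearMap.id ℂ L2)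
    (hGinv2 : Ginv ∘L (adjoint TΦ ∘L U ∘L TΨ) = ContinuousLinearMap.id ℂ L2) :
    (∃ A > (0 : ℝ), ∃ B > (0 : ℝ), ∀ c : L2,
        A * ‖c‖ ^ 2 ≤ ‖TΦ c‖ ^ 2 ∧ ‖TΦ c‖ ^ 2 ≤ B * ‖c‖ ^ 2) ∧
    (∃ A > (0 : ℝ), ∃ B > (0 : ℝ), ∀ c : L2,
        A * ‖c‖ ^ 2 ≤ ‖TΨ c‖ ^ 2 ∧ ‖TΨ c‖ ^ 2 ≤ B * ‖c‖ ^ 2) ∧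
    (∀ d : L2, ‖d‖ ≤ Real.sqrt BΨ * ‖Ginv‖ * ‖U‖ * ‖TΦ d‖) := by
  -- pointwise identity from hGinv2 : d = Ginv (adjoint TΦ (U (TΨ d)))
  have hid2 : ∀ d : L2, Ginv ((adjoint TΦ) (U (TΨ d))) = d := by
    intro d
    have := congrArg (fun T : L2 →L[ℂ] L2 => T d) hGinv2
    simpa using this
  -- adjoint identity from hGinv1
  have hid1 : ∀ d : L2, (adjoint Ginv) ((adjoint TΨ) ((adjoint U) (TΦ d))) = d := by
    intro d
    have h := congrArg ContinuousLinearMap.adjoint hGinv1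
    simp only [adjoint_comp, adjoint_id, adjoint_adjoint] at h
    have := congrArg (fun T : L2 →L[ℂ] L2 => T d) h
    simpa using this
  -- key lower bound for TΦ
  have key1 : ∀ d : L2, ‖d‖ ≤ Real.sqrt BΨ * ‖Ginv‖ * ‖U‖ * ‖TΦ d‖ := by
    intro d
    calc ‖d‖ = ‖(adjoint Ginv) ((adjoint TΨ) ((adjoint U) (TΦ d)))‖ := by rw [hid1]
      _ ≤ ‖adjoint Ginv‖ * ‖(adjoint TΨ) ((adjoint U) (TΦ d))‖ := le_opNorm _ _
      _ ≤ ‖adjoint Ginv‖ * (‖adjoint TΨ‖ * ‖(adjoint U) (TΦ d)‖) := by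
          gcongr; exact le_opNorm _ _
      _ ≤ ‖adjoint Ginv‖ * (‖adjoint TΨ‖ * (‖adjoint U‖ * ‖TΦ d‖)) := by
          gcongr; exact le_opNorm _ _
      _ = ‖TΨ‖ * ‖Ginv‖ * ‖U‖ * ‖TΦ d‖ := by
          rw [ContinuousLinearMap.adjoint.norm_map, ContinuousLinearMap.adjoint.norm_map,
            ContinuousLinearMap.adjoint.norm_map]
          ring
      _ ≤ Real.sqrt BΨ * ‖Ginv‖ * ‖U‖ * ‖TΦ d‖ := by
          gcongr <;> positivity
  -- key lower bound for TΨ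
  have key2 : ∀ d : L2, ‖d‖ ≤ Real.sqrt BΦ * ‖Ginv‖ * ‖U‖ * ‖TΨ d‖ := by
    intro d
    calc ‖d‖ = ‖Ginv ((adjoint TΦ) (U (TΨ d)))‖ := by rw [hid2]
      _ ≤ ‖Ginv‖ * ‖(adjoint TΦ) (U (TΨ d))‖ := le_opNorm _ _
      _ ≤ ‖Ginv‖ * (‖adjoint TΦ‖ * ‖U (TΨ d)‖) := by gcongr; exact le_opNorm _ _
      _ ≤ ‖Ginv‖ * (‖adjoint TΦ‖ * (‖U‖ * ‖TΨ d‖)) := by gcongr; exact le_opNorm _ _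
      _ = ‖TΦ‖ * ‖Ginv‖ * ‖U‖ * ‖TΨ d‖ := by
          rw [ContinuousLinearMap.adjoint.norm_map]; ring
      _ ≤ Real.sqrt BΦ * ‖Ginv‖ * ‖U‖ * ‖TΨ d‖ := by gcongr <;> positivity
  -- a nonzero element of L2
  have hone : ‖(lp.single 2 0 (1 : ℂ) : L2)‖ = 1 := by
    have := lp.norm_single (p := 2) (E := fun _ : ℕ => ℂ) (by norm_num) 0 (1:ℂ)
    simpa using this
  set CΦ := Real.sqrt BΨ * ‖Ginv‖ * ‖U‖ with hCΦ
  set CΨ := Real.sqrt BΦ * ‖Ginv‖ * ‖U‖ with hCΨ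
  have hCΦpos : 0 < CΦ := by
    by_contra h
    push_neg at h
    have h1 := key1 (lp.single 2 0 (1 : ℂ))
    rw [hone] at h1
    nlinarith [norm_nonneg (TΦ (lp.single 2 0 (1 : ℂ)))]
  have hCΨpos : 0 < CΨ := by
    by_contra h
    push_neg at h
    have h1 := key2 (lp.single 2 0 (1 : ℂ))
    rw [hone] at h1
    nlinarith [norm_nonneg (TΨ (lp.single 2 0 (1 : ℂ)))]
  refine ⟨⟨(CΦ^2)⁻¹, by positivity, Real.sqrt BΦ ^ 2 + 1, by positivity, ?_⟩,
    ⟨(CΨ^2)⁻¹, by positivity, Real.sqrt BΨ ^ 2 + 1, by positivity, ?_⟩, key1⟩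
  · intro c
    constructor
    · rw [inv_mul_le_iff₀ (by positivity)]
      have h1 := key1 c
      nlinarith [norm_nonneg c, norm_nonneg (TΦ c)]
    · have h1 : ‖TΦ c‖ ≤ Real.sqrt BΦ * ‖c‖ :=
        le_trans (TΦ.le_opNorm c) (by gcongr)
      nlinarith [norm_nonneg c, norm_nonneg (TΦ c), sq_nonneg (‖c‖),
        Real.sqrt_nonneg BΦ]
    
  · intro c
    constructor
    · rw [inv_mul_le_iff₀ (by positivity)]
      have h1 := key2 c
      nlinarith [norm_nonneg c, norm_nonneg (TΨ c)]
    · have h1 : ‖TΨ c‖ ≤ Real.sqrt BΨ * ‖c‖ :=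
        le_trans (TΨ.le_opNorm c) (by gcongr)
      nlinarith [norm_nonneg c, norm_nonneg (TΨ c), sq_nonneg (‖c‖),
        Real.sqrt_nonneg BΨ]
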